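/- arXiv:1408.0145 — 2 statements merged into one kernel-verified Lean document; each statement's English description precedes it below -/
import Mathlib

section
/- Let W be an orthogonal matrix and Λ a diagonal matrix with Λ² = I. If M := H Wᵀ Λ is symmetric and positive definite for a given invertible matrix H, then (H Hᵀ)^{-1/2} H = Λ W. -/
open Matrix

section

open scoped ComplexOrder

/-- The positive semidefinite square root of a positive semidefinite matrix
(the definition of Mathlib of December 2024, since removed). -/
noncomputable def Matrix.PosSemidef.sqrt {𝕜 : Type*} [RCLike 𝕜] {n : Type*} [Fintype n]
    [DecidableEq n] {A : Matrix n n 𝕜} (hA : A.PosSemidef) : Matrix n n 𝕜 :=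
  hA.1.eigenvectorUnitary.1 * diagonal ((↑) ∘ (√·) ∘ hA.1.eigenvalues) *
  (star hA.1.eigenvectorUnitary : Matrix n n 𝕜)

end

section

open scoped MatrixOrder

theorem posSemidef_sqrt_eq_cfc_sqrt_aux {d : ℕ} {B : Matrix (Fin d) (Fin d) ℝ}
    (hB : B.PosSemidef) : hB.sqrt = CFC.sqrt B := by
  rw [CFC.sqrt_eq_cfc, cfc_nnreal_eq_real _ B, hB.1.cfc_eq]
  simp only [IsHermitian.cfc, Unitary.conjStarAlgAut_apply, Matrix.PosSemidef.sqrt]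
  congr 3
  funext i
  simp [Real.coe_toNNReal', max_eq_left (hB.eigenvalues_nonneg i)]

theorem posSemidef_eq_sqrt_aux {d : ℕ} {M B : Matrix (Fin d) (Fin d) ℝ}
    (hM : M.PosSemidef) (hB : B.PosSemidef) (h : M ^ 2 = B) : M = hB.sqrt := by
  rw [posSemidef_sqrt_eq_cfc_sqrt_aux]
  exact (CFC.sqrt_unique (by rw [← pow_two]; exact h)
    (Matrix.nonneg_iff_posSemidef.mpr hM)).symm

end

/-- If `W` is orthogonal, `Λ = diag l` with `l i = ±1`, `H` invertible and
`M = H Wᵀ Λ` is symmetric positive definite, then `(H Hᵀ)^{-1/2} H = Λ W`. -/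
theorem stmt5 {d : ℕ} (W H : Matrix (Fin d) (Fin d) ℝ) (hW : W * Wᵀ = 1)
    (l : Fin d → ℝ) (hl : ∀ i, l i = 1 ∨ l i = -1)
    (hH : IsUnit H.det) (hPD : (H * Hᵀ).PosDef)
    (hsymm : (H * Wᵀ * Matrix.diagonal l).IsSymm)
    (hpos : (H * Wᵀ * Matrix.diagonal l).PosDef) :
    hPD.posSemidef.sqrt⁻¹ * H = Matrix.diagonal l * W := by
  set M := H * Wᵀ * Matrix.diagonal l with hM
  have hL2 : Matrix.diagonal l * Matrix.diagonal l = 1 := by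
    rw [Matrix.diagonal_mul_diagonal]
    ext i j
    rcases hl i with h | h <;>
      simp [Matrix.diagonal_apply, Matrix.one_apply, h]
  have hWW : Wᵀ * W = 1 := mul_eq_one_comm.mp hW
  have hMT : Mᵀ = Matrix.diagonal l * W * Hᵀ := by
    rw [hM, Matrix.transpose_mul, Matrix.transpose_mul, Matrix.transpose_transpose,
      Matrix.diagonal_transpose, Matrix.mul_assoc]
  have hsq : M ^ 2 = H * Hᵀ := by
    rw [pow_two]
    nth_rewrite 2 [← hsymm.eq]
    rw [hMT, hM]
    calc H * Wᵀ * Matrix.diagonal l * (Matrix.diagonal l * W * Hᵀ)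
        = H * (Wᵀ * ((Matrix.diagonal l * Matrix.diagonal l) * W)) * Hᵀ := by
          simp only [Matrix.mul_assoc]
      _ = H * Hᵀ := by rw [hL2, one_mul, hWW, Matrix.mul_one]
  have hsqrt : M = hPD.posSemidef.sqrt :=
    posSemidef_eq_sqrt_aux hpos.posSemidef hPD.posSemidef hsq
  rw [← hsqrt, hM]
  have hWu : IsUnit Wᵀ.det := by
    refine IsUnit.of_mul_eq_one W.det ?_
    rw [← Matrix.det_mul, hWW, Matrix.det_one]
  have hLu : IsUnit (Matrix.diagonal l).det := by
    refine IsUnit.of_mul_eq_one (Matrix.diagonal l).det ?_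
    rw [← Matrix.det_mul, hL2, Matrix.det_one]
  rw [Matrix.mul_inv_rev, Matrix.mul_inv_rev]
  have hLinv : (Matrix.diagonal l)⁻¹ = Matrix.diagonal l :=
    Matrix.inv_eq_right_inv hL2
  have hWTinv : Wᵀ⁻¹ = W := Matrix.inv_eq_right_inv hWW
  rw [hLinv, hWTinv, Matrix.mul_assoc, Matrix.mul_assoc,
    Matrix.nonsing_inv_mul H hH, Matrix.mul_one]
end

section
/- Let W be an orthogonal matrix, Λ diagonal with Λ² = I, and H an invertible matrix such that (H Hᵀ)^{-1/2} H = Λ W. Then H Wᵀ Λ is symmetric and positive definite. -/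
open Matrix

open scoped ComplexOrder in
/-- The square root of a positive semidefinite matrix, as `Matrix.PosSemidef.sqrt` was defined
in the older Mathlib (removed since). -/
noncomputable def posSemidefSqrtOld {n 𝕜 : Type*} [Fintype n] [RCLike 𝕜] [DecidableEq n]
    {A : Matrix n n 𝕜} (hA : A.PosSemidef) : Matrix n n 𝕜 :=
  hA.1.eigenvectorUnitary.1 * diagonal (fun i => ((hA.1.eigenvalues i).sqrt : 𝕜)) *
    (star hA.1.eigenvectorUnitary : Matrix n n 𝕜)

open scoped ComplexOrder in
lemma posSemidefSqrtOld_mul_self {n 𝕜 : Type*} [Fintype n] [RCLike 𝕜] [DecidableEq n]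
    {A : Matrix n n 𝕜} (hA : A.PosSemidef) : posSemidefSqrtOld hA * posSemidefSqrtOld hA = A := by
  conv_rhs => rw [hA.1.spectral_theorem, Unitary.conjStarAlgAut_apply]
  have hU : (star hA.1.eigenvectorUnitary : Matrix n n 𝕜) * hA.1.eigenvectorUnitary.1 = 1 :=
    Unitary.coe_star_mul_self _
  have hD : diagonal (fun i => ((hA.1.eigenvalues i).sqrt : 𝕜)) *
      diagonal (fun i => ((hA.1.eigenvalues i).sqrt : 𝕜)) =
      diagonal (RCLike.ofReal ∘ hA.1.eigenvalues) := by
    rw [diagonal_mul_diagonal]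
    congr 1
    funext i
    simp only [Function.comp_apply, ← RCLike.ofReal_mul,
      Real.mul_self_sqrt (hA.eigenvalues_nonneg i)]
  unfold posSemidefSqrtOld
  calc _ = hA.1.eigenvectorUnitary.1 * diagonal (fun i => ((hA.1.eigenvalues i).sqrt : 𝕜)) *
        ((star hA.1.eigenvectorUnitary : Matrix n n 𝕜) * hA.1.eigenvectorUnitary.1) *
        diagonal (fun i => ((hA.1.eigenvalues i).sqrt : 𝕜)) *
        (star hA.1.eigenvectorUnitary : Matrix n n 𝕜) := by simp only [Matrix.mul_assoc]
    _ = _ := by rw [hU, Matrix.mul_one, Matrix.mul_assoc _ (diagonal _) (diagonal _), hD]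

open scoped ComplexOrder in
lemma posSemidefSqrtOld_posSemidef {n 𝕜 : Type*} [Fintype n] [RCLike 𝕜] [DecidableEq n]
    {A : Matrix n n 𝕜} (hA : A.PosSemidef) : (posSemidefSqrtOld hA).PosSemidef := by
  unfold posSemidefSqrtOld
  have hD : (diagonal (fun i => ((hA.1.eigenvalues i).sqrt : 𝕜))).PosSemidef :=
    PosSemidef.diagonal (d := fun i => ((hA.1.eigenvalues i).sqrt : 𝕜))
      (fun i => by simp [Real.sqrt_nonneg])
  simpa [star_eq_conjTranspose] using hD.mul_mul_conjTranspose_same hA.1.eigenvectorUnitary.1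

lemma aux_posDef_of_isUnit_det {n : Type*} [Fintype n] [DecidableEq n]
    {S : Matrix n n ℝ} (hS : S.PosSemidef) (h : IsUnit S.det) : S.PosDef := by
  exact hS.posDef_iff_isUnit.mpr ((isUnit_iff_isUnit_det S).mpr h)

/-- If `W` is orthogonal, `Λ = diag l` with `l i = ±1`, `H` invertible and
`(H Hᵀ)^{-1/2} H = Λ W`, then `H Wᵀ Λ` is symmetric and positive definite. -/
theorem stmt6 {d : ℕ} (W H : Matrix (Fin d) (Fin d) ℝ) (hW : W * Wᵀ = 1)
    (l : Fin d → ℝ) (hl : ∀ i, l i = 1 ∨ l i = -1)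
    (hH : IsUnit H.det) (hPD : (H * Hᵀ).PosDef)
    (hfix : (posSemidefSqrtOld hPD.posSemidef)⁻¹ * H = Matrix.diagonal l * W) :
    (H * Wᵀ * Matrix.diagonal l).IsSymm ∧ (H * Wᵀ * Matrix.diagonal l).PosDef := by
  set S := posSemidefSqrtOld hPD.posSemidef with hSdef
  have hSS : S * S = H * Hᵀ := posSemidefSqrtOld_mul_self hPD.posSemidef
  have hSsemi : S.PosSemidef := posSemidefSqrtOld_posSemidef hPD.posSemidef
  have hSdet : IsUnit S.det := by
    have : S.det * S.det = (H * Hᵀ).det := by rw [← det_mul, hSS]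
    have hd : (H * Hᵀ).det ≠ 0 := hPD.det_pos.ne'
    refine isUnit_iff_ne_zero.mpr fun h0 => hd ?_
    rw [← this, h0, mul_zero]
  have hHeq : H = S * (Matrix.diagonal l * W) := by
    rw [← hfix, ← Matrix.mul_assoc, Matrix.mul_nonsing_inv S hSdet, Matrix.one_mul]
  have hll : Matrix.diagonal l * Matrix.diagonal l = 1 := by
    rw [diagonal_mul_diagonal]
    have : (fun i => l i * l i) = fun _ => (1:ℝ) := funext fun i => by
      rcases hl i with h | h <;> simp [h]
    rw [this, diagonal_one]
  have hmain : H * Wᵀ * Matrix.diagonal l = S := by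
    rw [hHeq]
    calc S * (Matrix.diagonal l * W) * Wᵀ * Matrix.diagonal l
        = S * (Matrix.diagonal l * (W * Wᵀ) * Matrix.diagonal l) := by
          simp only [Matrix.mul_assoc]
      _ = S := by rw [hW, Matrix.mul_one, hll, Matrix.mul_one]
  rw [hmain]
  have hPDS : S.PosDef := aux_posDef_of_isUnit_det hSsemi hSdet
  refine ⟨?_, hPDS⟩
  have := hSsemi.1
  rwa [Matrix.IsHermitian, conjTranspose] at this
end
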